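/- arXiv:2108.04762 — 4 statements merged into one kernel-verified Lean document; each statement's English description precedes it below -/
import Mathlib

section
/- Let n ≥ 1 and let f be a C^n function on a bounded interval I with |f^{(n)}(x)| ≥ 1 for all x ∈ I. Then there exists a constant C_n > 0 depending only on n such that sup_{x∈I} |f(x)| ≥ C_n |I|^n. -/
open Set

private lemma iter_agree {f : ℝ → ℝ} {s t : Set ℝ} (hst : t ⊆ s)
    (hs : UniqueDiffOn ℝ s) (ht : UniqueDiffOn ℝ t) {n : ℕ} (hf : ContDiffOn ℝ n f s) :
    ∀ k, k ≤ n → ∀ x ∈ t, iteratedDerivWithin k f t x = iteratedDerivWithin k f s x := by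
  intro k
  induction k with
  | zero => simp
  | succ k ih =>
    intro hk x hx
    rw [iteratedDerivWithin_succ, iteratedDerivWithin_succ]
    have h1 : derivWithin (iteratedDerivWithin k f t) t x
        = derivWithin (iteratedDerivWithin k f s) t x :=
      derivWithin_congr (fun y hy => ih (Nat.le_of_succ_le hk) y hy)
        (ih (Nat.le_of_succ_le hk) x hx)
    rw [h1]
    have hdiff : DifferentiableWithinAt ℝ (iteratedDerivWithin k f s) s x :=
      hf.differentiableOn_iteratedDerivWithin (by exact_mod_cast hk) hs x (hst hx)
    exact (hdiff.hasDerivWithinAt.mono hst).derivWithin (ht x hx)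

/-- Van der Corput-type sublevel lemma (Christ): if `f` is `C^n` on an interval `I = [a,b]`
with `|f^{(n)}| ≥ 1` on `I`, then `sup_I |f| ≥ C_n |I|^n` with `C_n` depending only on `n`. -/
theorem stmt2 (n : ℕ) (hn : 1 ≤ n) :
    ∃ C : ℝ, 0 < C ∧ ∀ (a b : ℝ), a ≤ b → ∀ f : ℝ → ℝ,
      ContDiffOn ℝ n f (Set.Icc a b) →
      (∀ x ∈ Set.Icc a b, 1 ≤ |iteratedDerivWithin n f (Set.Icc a b) x|) →
      ∃ x ∈ Set.Icc a b, C * (b - a) ^ n ≤ |f x| := by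
  induction n, hn using Nat.le_induction with
  | base =>
    refine ⟨1/2, by norm_num, ?_⟩
    intro a b hab f hf hder
    rcases eq_or_lt_of_le hab with rfl | hab'
    · exact ⟨a, by simp, by simp⟩
    have ud : UniqueDiffOn ℝ (Icc a b) := uniqueDiffOn_Icc hab'
    have hcont : ContinuousOn f (Icc a b) := hf.continuousOn
    have hderiv : ∀ x ∈ Ioo a b, HasDerivAt f (derivWithin f (Icc a b) x) x := by
      intro x hx
      have hmem : Icc a b ∈ nhds x := Icc_mem_nhds hx.1 hx.2
      exact ((hf.differentiableOn (by simp) x (Ioo_subset_Icc_self hx)).hasDerivWithinAt).hasDerivAt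
        hmem
    obtain ⟨c, hc, hslope⟩ := exists_hasDerivAt_eq_slope f _ hab' hcont hderiv
    have hc' : c ∈ Icc a b := Ioo_subset_Icc_self hc
    have h1 : 1 ≤ |derivWithin f (Icc a b) c| := by
      have := hder c hc'
      rwa [iteratedDerivWithin_one] at this
    have hba : (0:ℝ) < b - a := sub_pos.2 hab'
    have hgap : b - a ≤ |f b - f a| := by
      rw [hslope, abs_div, abs_of_pos hba] at h1
      calc b - a = 1 * (b - a) := (one_mul _).symm
        _ ≤ (|f b - f a| / (b - a)) * (b - a) := by
            apply mul_le_mul_of_nonneg_right h1 hba.le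
        _ = |f b - f a| := div_mul_cancel₀ _ hba.ne'
    by_cases hcase : |f a| ≤ |f b|
    · refine ⟨b, right_mem_Icc.2 hab, ?_⟩
      have h2 : |f b - f a| ≤ |f b| + |f a| := abs_sub (f b) (f a)
      nlinarith [abs_nonneg (f a), abs_nonneg (f b)]
    · refine ⟨a, left_mem_Icc.2 hab, ?_⟩
      push_neg at hcase
      have h2 : |f b - f a| ≤ |f b| + |f a| := abs_sub (f b) (f a)
      nlinarith [abs_nonneg (f a), abs_nonneg (f b)]
  | succ n hn1 ih =>
    obtain ⟨C, hC, hIH⟩ := ih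
    refine ⟨C / 4 ^ (n+1), by positivity, ?_⟩
    intro a b hab f hf hder
    rcases eq_or_lt_of_le hab with rfl | hab'
    · exact ⟨a, by simp, by simp⟩
    have ud : UniqueDiffOn ℝ (Icc a b) := uniqueDiffOn_Icc hab'
    set L := b - a with hL
    have hL0 : (0:ℝ) < L := sub_pos.2 hab'
    set F := iteratedDerivWithin n f (Icc a b) with hF
    have hn' : (n : WithTop ℕ∞) < (n+1 : ℕ) := by exact_mod_cast Nat.lt_succ_self n
    have hFdiff : DifferentiableOn ℝ F (Icc a b) :=
      hf.differentiableOn_iteratedDerivWithin hn' ud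
    have hFcont : ContinuousOn F (Icc a b) := hFdiff.continuousOn
    set G := fun x => iteratedDerivWithin (n+1) f (Icc a b) x with hG
    have hGcont : ContinuousOn G (Icc a b) :=
      hf.continuousOn_iteratedDerivWithin le_rfl ud
    have hG1 : ∀ x ∈ Icc a b, 1 ≤ |G x| := hder
    have hderivF : ∀ x ∈ Icc a b, derivWithin F (Icc a b) x = G x := by
      intro x hx
      exact (congrFun iteratedDerivWithin_succ x).symm
    -- deriv at interior points
    have hint : interior (Icc a b) = Ioo a b := interior_Icc
    have hFdI : DifferentiableOn ℝ F (interior (Icc a b)) := by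
      rw [hint]
      intro x hx
      have hmem : Icc a b ∈ nhds x := Icc_mem_nhds hx.1 hx.2
      exact ((hFdiff x (Ioo_subset_Icc_self hx)).differentiableAt hmem).differentiableWithinAt
    have hderiv_eq : ∀ x ∈ Ioo a b, deriv F x = G x := by
      intro x hx
      have hmem : Icc a b ∈ nhds x := Icc_mem_nhds hx.1 hx.2
      rw [← derivWithin_of_mem_nhds hmem]
      exact hderivF x (Ioo_subset_Icc_self hx)
    -- sign dichotomy
    have hsign : (∀ x ∈ Icc a b, 1 ≤ G x) ∨ (∀ x ∈ Icc a b, G x ≤ -1) := by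
      by_contra hcon
      push_neg at hcon
      obtain ⟨⟨x, hx, hxlt⟩, ⟨y, hy, hylt⟩⟩ := hcon
      have hxle : G x ≤ -1 := by
        rcases abs_le_iff_mul_self_le.mp (le_refl |G x|) with _
        rcases le_or_gt (G x) (-1) with h | h
        · exact h
        · exfalso; have := hG1 x hx; rcases abs_cases (G x) with ⟨h1,_⟩|⟨h1,_⟩ <;> linarith
      have hyge : 1 ≤ G y := by
        rcases le_or_gt 1 (G y) with h | h
        · exact h
        · exfalso; have := hG1 y hy; rcases abs_cases (G y) with ⟨h1,_⟩|⟨h1,_⟩ <;> linarith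
      have hsub : uIcc x y ⊆ Icc a b := uIcc_subset_Icc hx hy
      have h0 : (0:ℝ) ∈ uIcc (G x) (G y) := by
        rw [mem_uIcc]; left; constructor <;> linarith
      obtain ⟨z, hz, hz0⟩ := intermediate_value_uIcc (hGcont.mono hsub) h0
      have := hG1 z (hsub hz)
      rw [hz0] at this; simp at this; linarith
    -- find subinterval of length L/4 where |F| ≥ L/4
    have key : ∃ c d, a ≤ c ∧ c < d ∧ d ≤ b ∧ d - c = L/4 ∧ ∀ x ∈ Icc c d, L/4 ≤ |F x| := by
      set m := (a+b)/2 with hm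
      have hma : a ≤ m := by rw [hm]; linarith
      have hmb : m ≤ b := by rw [hm]; linarith
      rcases hsign with hpos | hneg
      · have grow : ∀ x ∈ Icc a b, ∀ y ∈ Icc a b, x ≤ y → 1 * (y - x) ≤ F y - F x := by
          refine (convex_Icc a b).mul_sub_le_image_sub_of_le_deriv hFcont hFdI ?_
          intro x hx; rw [hint] at hx; rw [hderiv_eq x hx]; exact hpos x (Ioo_subset_Icc_self hx)
        rcases le_or_gt 0 (F m) with hFm | hFm
        · refine ⟨m + L/4, m + L/2, by linarith, by linarith, by rw [hm,hL]; linarith,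
            by ring, ?_⟩
          intro x hx
          have hx1 : m + L/4 ≤ x := hx.1
          have hx2 : x ≤ b := by have := hx.2; rw [hm, hL] at *; linarith
          have hxab : x ∈ Icc a b := ⟨by linarith, hx2⟩
          have := grow m ⟨hma, hmb⟩ x hxab (by linarith)
          have hFx : L/4 ≤ F x := by linarith
          rw [abs_of_nonneg (by linarith)]; exact hFx
        · refine ⟨m - L/2, m - L/4, by rw [hm,hL]; linarith, by linarith,
            by linarith, by ring, ?_⟩
          intro x hx
          have hx2 : x ≤ m - L/4 := hx.2
          have hx1 : a ≤ x := by have := hx.1; rw [hm, hL] at *; linarith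
          have hxab : x ∈ Icc a b := ⟨hx1, by linarith⟩
          have := grow x hxab m ⟨hma, hmb⟩ (by linarith)
          have hFx : F x ≤ -(L/4) := by linarith
          rw [abs_of_nonpos (by linarith)]; linarith
      · have grow : ∀ x ∈ Icc a b, ∀ y ∈ Icc a b, x ≤ y → F y - F x ≤ (-1) * (y - x) := by
          refine (convex_Icc a b).image_sub_le_mul_sub_of_deriv_le hFcont hFdI ?_
          intro x hx; rw [hint] at hx; rw [hderiv_eq x hx]; exact hneg x (Ioo_subset_Icc_self hx)
        rcases le_or_gt (F m) 0 with hFm | hFm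
        · refine ⟨m + L/4, m + L/2, by linarith, by linarith, by rw [hm,hL]; linarith,
            by ring, ?_⟩
          intro x hx
          have hx1 : m + L/4 ≤ x := hx.1
          have hx2 : x ≤ b := by have := hx.2; rw [hm, hL] at *; linarith
          have hxab : x ∈ Icc a b := ⟨by linarith, hx2⟩
          have := grow m ⟨hma, hmb⟩ x hxab (by linarith)
          have hFx : F x ≤ -(L/4) := by linarith
          rw [abs_of_nonpos (by linarith)]; linarith
        · refine ⟨m - L/2, m - L/4, by rw [hm,hL]; linarith, by linarith,
            by linarith, by ring, ?_⟩
          intro x hx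
          have hx2 : x ≤ m - L/4 := hx.2
          have hx1 : a ≤ x := by have := hx.1; rw [hm, hL] at *; linarith
          have hxab : x ∈ Icc a b := ⟨hx1, by linarith⟩
          have := grow x hxab m ⟨hma, hmb⟩ (by linarith)
          have hFx : L/4 ≤ F x := by linarith
          rw [abs_of_nonneg (by linarith)]; exact hFx
    obtain ⟨c, d, hac, hcd, hdb, hlen, hFbig⟩ := key
    have hsub : Icc c d ⊆ Icc a b := Icc_subset_Icc hac hdb
    have udJ : UniqueDiffOn ℝ (Icc c d) := uniqueDiffOn_Icc hcd
    have hfJ : ContDiffOn ℝ n f (Icc c d) :=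
      (hf.of_le (by exact_mod_cast Nat.le_succ n)).mono hsub
    -- apply IH to g = (4/L) * f on [c,d]
    set g := fun y => (4/L) * f y with hg
    have hgJ : ContDiffOn ℝ n g (Icc c d) := contDiffOn_const.mul hfJ
    have hgder : ∀ x ∈ Icc c d, 1 ≤ |iteratedDerivWithin n g (Icc c d) x| := by
      intro x hx
      have h1 : iteratedDerivWithin n g (Icc c d) x
          = (4/L) * iteratedDerivWithin n f (Icc c d) x :=
        iteratedDerivWithin_const_mul hx udJ (4/L) (hfJ x hx)
      have h2 : iteratedDerivWithin n f (Icc c d) x = F x :=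
        iter_agree hsub ud udJ (hf.of_le (by exact_mod_cast Nat.le_succ n)) n le_rfl x hx
      rw [h1, h2, abs_mul, abs_of_pos (by positivity : (0:ℝ) < 4/L)]
      have := hFbig x hx
      calc (1:ℝ) = (4/L) * (L/4) := by field_simp
        _ ≤ (4/L) * |F x| := by
            apply mul_le_mul_of_nonneg_left this (by positivity)
    obtain ⟨x, hx, hxbd⟩ := hIH c d hcd.le g hgJ hgder
    refine ⟨x, hsub hx, ?_⟩
    have hgx : |g x| = (4/L) * |f x| := by
      rw [hg]; simp only [abs_mul, abs_of_pos (by positivity : (0:ℝ) < 4/L)]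
    rw [hgx, hlen] at hxbd
    have hstep : C * (L/4)^n * (L/4) ≤ |f x| := by
      have h4 : (0:ℝ) < L/4 := by positivity
      have := mul_le_mul_of_nonneg_right hxbd h4.le
      calc C * (L/4)^n * (L/4) ≤ (4/L) * |f x| * (L/4) := this
        _ = |f x| := by field_simp
    calc C / 4^(n+1) * (b-a)^(n+1) = C * (L/4)^n * (L/4) := by
          rw [← hL, div_pow]; field_simp; ring
      _ ≤ |f x| := hstep
end

section
/- Let α₁, α₂ be positive integers and let μ > 0. Define D_j = {(x,y) ∈ [0,1]² : 2^j < x^{α₁} y^{α₂} ≤ 2^{j+1}} for j ∈ ℤ. Then for all f, g, h ∈ L²(ℝ), ∫_{{(x,y)∈[0,1]²: x^{α₁} y^{α₂} ≤ μ}} |f(x) g(y) h(x+y)| dx dy ≤ C μ^{1/(2(α₁+α₂))} ‖f‖₂ ‖g‖₂ ‖h‖₂, where C depends only on α₁ and α₂. -/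
open MeasureTheory Set
open scoped ENNReal NNReal

lemma conj22 : Real.HolderConjugate 2 2 := Real.HolderConjugate.two_two

lemma eLpNorm_two_eq (f : ℝ → ℂ) :
    eLpNorm f 2 volume = (∫⁻ x, (‖f x‖₊ : ℝ≥0∞) ^ (2:ℝ)) ^ (1/2 : ℝ) := by
  rw [eLpNorm_eq_lintegral_rpow_enorm_toReal (by norm_num) (by norm_num)]
  norm_num
  rfl

lemma strip_bound {f g h : ℝ → ℂ} (hf : Measurable f) (hg : Measurable g) (hh : Measurable h)
    {s : Set ℝ} :
    ∫⁻ p in s ×ˢ Set.Icc (0:ℝ) 1, (‖f p.1‖₊ : ℝ≥0∞) * ‖g p.2‖₊ * ‖h (p.1 + p.2)‖₊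
      ≤ volume s ^ (1/2:ℝ) *
        (eLpNorm f 2 volume * (eLpNorm g 2 volume * eLpNorm h 2 volume)) := by
  have hFm : Measurable fun p : ℝ × ℝ => (‖f p.1‖₊ : ℝ≥0∞) * ‖g p.2‖₊ * ‖h (p.1 + p.2)‖₊ :=
    (((hf.comp measurable_fst).enorm.mul (hg.comp measurable_snd).enorm).mul
      ((hh.comp (measurable_fst.add measurable_snd)).enorm))
  rw [Measure.volume_eq_prod, ← Measure.prod_restrict, lintegral_prod _ hFm.aemeasurable]
  have inner : ∀ x : ℝ, ∫⁻ y in Icc (0:ℝ) 1, (‖f x‖₊ : ℝ≥0∞) * ‖g y‖₊ * ‖h (x + y)‖₊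
      ≤ (‖f x‖₊ : ℝ≥0∞) * (eLpNorm g 2 volume * eLpNorm h 2 volume) := by
    intro x
    simp_rw [mul_assoc]
    have hgh : Measurable fun y : ℝ => (‖g y‖₊ : ℝ≥0∞) * ‖h (x + y)‖₊ := by
      exact hg.enorm.mul ((hh.comp (measurable_id.const_add x)).enorm)
    rw [lintegral_const_mul _ hgh]
    refine mul_le_mul_right ?_ _
    calc ∫⁻ y in Icc (0:ℝ) 1, (‖g y‖₊ : ℝ≥0∞) * ‖h (x + y)‖₊
        ≤ (∫⁻ y in Icc (0:ℝ) 1, (‖g y‖₊ : ℝ≥0∞) ^ (2:ℝ)) ^ (1/2:ℝ) *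
          (∫⁻ y in Icc (0:ℝ) 1, (‖h (x + y)‖₊ : ℝ≥0∞) ^ (2:ℝ)) ^ (1/2:ℝ) := by
          have := ENNReal.lintegral_mul_le_Lp_mul_Lq (volume.restrict (Icc (0:ℝ) 1)) conj22
            (f := fun y => (‖g y‖₊ : ℝ≥0∞)) (g := fun y => (‖h (x + y)‖₊ : ℝ≥0∞))
            hg.enorm.aemeasurable
            (by exact ((hh.comp (measurable_id.const_add x)).enorm.aemeasurable))
          simpa using this
      _ ≤ (∫⁻ y, (‖g y‖₊ : ℝ≥0∞) ^ (2:ℝ)) ^ (1/2:ℝ) *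
          (∫⁻ y, (‖h (x + y)‖₊ : ℝ≥0∞) ^ (2:ℝ)) ^ (1/2:ℝ) := by
          gcongr <;> exact Measure.restrict_le_self
      _ = eLpNorm g 2 volume * eLpNorm h 2 volume := by
          rw [eLpNorm_two_eq, eLpNorm_two_eq]
          congr 1
          congr 1
          exact lintegral_add_left_eq_self (fun z => (‖h z‖₊ : ℝ≥0∞) ^ (2:ℝ)) x
  calc ∫⁻ x in s, ∫⁻ y in Icc (0:ℝ) 1, (‖f x‖₊ : ℝ≥0∞) * ‖g y‖₊ * ‖h (x + y)‖₊
      ≤ ∫⁻ x in s, (‖f x‖₊ : ℝ≥0∞) * (eLpNorm g 2 volume * eLpNorm h 2 volume) :=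
        lintegral_mono inner
    _ = (∫⁻ x in s, (‖f x‖₊ : ℝ≥0∞)) * (eLpNorm g 2 volume * eLpNorm h 2 volume) :=
        lintegral_mul_const _ hf.enorm
    _ ≤ ((∫⁻ x in s, (‖f x‖₊ : ℝ≥0∞) ^ (2:ℝ)) ^ (1/2:ℝ) * volume s ^ (1/2:ℝ)) *
        (eLpNorm g 2 volume * eLpNorm h 2 volume) := by
        refine mul_le_mul_left ?_ _
        have := ENNReal.lintegral_mul_le_Lp_mul_Lq (volume.restrict s) conj22
          (f := fun y => (‖f y‖₊ : ℝ≥0∞)) (g := fun _ => (1:ℝ≥0∞))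
          hf.enorm.aemeasurable aemeasurable_const
        simp only [Pi.mul_apply, mul_one, ENNReal.one_rpow, lintegral_const,
          Measure.restrict_apply_univ, one_mul] at this
        simpa using this
    _ ≤ volume s ^ (1/2:ℝ) *
        (eLpNorm f 2 volume * (eLpNorm g 2 volume * eLpNorm h 2 volume)) := by
        rw [eLpNorm_two_eq f]
        have : (∫⁻ x in s, (‖f x‖₊ : ℝ≥0∞) ^ (2:ℝ)) ^ (1/2:ℝ)
            ≤ (∫⁻ x, (‖f x‖₊ : ℝ≥0∞) ^ (2:ℝ)) ^ (1/2:ℝ) := by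
          exact ENNReal.rpow_le_rpow (lintegral_mono' Measure.restrict_le_self le_rfl)
            (by norm_num)
        calc ((∫⁻ x in s, (‖f x‖₊ : ℝ≥0∞) ^ (2:ℝ)) ^ (1/2:ℝ) * volume s ^ (1/2:ℝ)) *
              (eLpNorm g 2 volume * eLpNorm h 2 volume)
            ≤ ((∫⁻ x, (‖f x‖₊ : ℝ≥0∞) ^ (2:ℝ)) ^ (1/2:ℝ) * volume s ^ (1/2:ℝ)) *
              (eLpNorm g 2 volume * eLpNorm h 2 volume) := by gcongr
          _ = volume s ^ (1/2:ℝ) *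
              ((∫⁻ x, (‖f x‖₊ : ℝ≥0∞) ^ (2:ℝ)) ^ (1/2:ℝ) *
                (eLpNorm g 2 volume * eLpNorm h 2 volume)) := by ring

/-- Trilinear sublevel set estimate for the monomial `x^{α₁} y^{α₂}` on the unit square:
the integral of `|f(x)g(y)h(x+y)|` over `{x^{α₁} y^{α₂} ≤ μ}` is bounded by
`C μ^{1/(2(α₁+α₂))} ‖f‖₂‖g‖₂‖h‖₂`, with `C` depending only on `α₁, α₂`. -/
theorem stmt3 (α₁ α₂ : ℕ) (hα₁ : 1 ≤ α₁) (hα₂ : 1 ≤ α₂) :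
    ∃ C : ℝ, 0 < C ∧ ∀ (μ : ℝ), 0 < μ → ∀ f g h : ℝ → ℂ,
      MemLp f 2 volume → MemLp g 2 volume → MemLp h 2 volume →
      ∫ p in {p : ℝ × ℝ | p ∈ Set.Icc (0:ℝ) 1 ×ˢ Set.Icc (0:ℝ) 1 ∧
          p.1 ^ α₁ * p.2 ^ α₂ ≤ μ},
        ‖f p.1‖ * ‖g p.2‖ * ‖h (p.1 + p.2)‖ ≤
      C * μ ^ (1 / (2 * ((α₁ : ℝ) + (α₂ : ℝ)))) *
        ((eLpNorm f 2 volume).toReal * (eLpNorm g 2 volume).toReal *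
          (eLpNorm h 2 volume).toReal) := by
  refine ⟨2, two_pos, ?_⟩
  intro μ hμ f g h hf hg hh
  have hn : (0:ℝ) < (α₁ : ℝ) + (α₂ : ℝ) := by
    have h1 : (1:ℝ) ≤ (α₁:ℝ) := by exact_mod_cast hα₁
    have h2 : (0:ℝ) ≤ (α₂:ℝ) := Nat.cast_nonneg _
    linarith
  set n : ℝ := (α₁ : ℝ) + (α₂ : ℝ) with hn_def
  set t : ℝ := μ ^ (1/n) with ht_def
  have htpos : 0 < t := Real.rpow_pos_of_pos hμ _
  set t' : ℝ := min t 1 with ht'_def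
  set S : Set (ℝ × ℝ) := {p : ℝ × ℝ | p ∈ Set.Icc (0:ℝ) 1 ×ˢ Set.Icc (0:ℝ) 1 ∧
      p.1 ^ α₁ * p.2 ^ α₂ ≤ μ} with hS_def
  -- the power identity
  have hT : t ^ (α₁ + α₂) = μ := by
    rw [ht_def, ← Real.rpow_natCast (μ ^ (1/n)) (α₁ + α₂), ← Real.rpow_mul hμ.le]
    have : 1/n * ((α₁ + α₂ : ℕ) : ℝ) = 1 := by
      push_cast
      rw [← hn_def]
      field_simp
    rw [this, Real.rpow_one]
  -- subset of the two strips
  have hsub : S ⊆ (Icc 0 t' ×ˢ Icc (0:ℝ) 1) ∪ (Icc (0:ℝ) 1 ×ˢ Icc 0 t') := by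
    rintro ⟨x, y⟩ ⟨⟨hx, hy⟩, hxy⟩
    by_cases hxt : x ≤ t
    · exact Or.inl ⟨⟨hx.1, le_min hxt hx.2⟩, hy⟩
    · refine Or.inr ⟨hx, ⟨hy.1, le_min ?_ hy.2⟩⟩
      by_contra hyt
      push_neg at hxt hyt
      have h1 : t ^ α₁ < x ^ α₁ := pow_lt_pow_left₀ hxt htpos.le (by omega)
      have h2 : t ^ α₂ < y ^ α₂ := pow_lt_pow_left₀ hyt htpos.le (by omega)
      have : μ < x ^ α₁ * y ^ α₂ := by
        have := mul_lt_mul'' h1 h2 (pow_nonneg htpos.le _) (pow_nonneg htpos.le _)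
        rwa [← pow_add, hT] at this
      linarith
  -- measurable representatives
  obtain ⟨f', hf'm, hff'⟩ : ∃ f', Measurable f' ∧ f =ᵐ[volume] f' :=
    ⟨hf.1.mk f, hf.1.stronglyMeasurable_mk.measurable, hf.1.ae_eq_mk⟩
  obtain ⟨g', hg'm, hgg'⟩ : ∃ g', Measurable g' ∧ g =ᵐ[volume] g' :=
    ⟨hg.1.mk g, hg.1.stronglyMeasurable_mk.measurable, hg.1.ae_eq_mk⟩
  obtain ⟨h', hh'm, hhh'⟩ : ∃ h', Measurable h' ∧ h =ᵐ[volume] h' :=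
    ⟨hh.1.mk h, hh.1.stronglyMeasurable_mk.measurable, hh.1.ae_eq_mk⟩
  -- a.e. equality of the integrands on ℝ²
  have h1 : ∀ᵐ p : ℝ × ℝ, f p.1 = f' p.1 := by
    refine measure_mono_null (fun p hp => ?_)
      (show (volume : Measure (ℝ×ℝ)) ({x | f x ≠ f' x} ×ˢ univ) = 0 from ?_)
    · exact ⟨hp, trivial⟩
    · rw [Measure.volume_eq_prod, Measure.prod_prod]
      rw [show volume {x | f x ≠ f' x} = 0 from hff', zero_mul]
  have h2 : ∀ᵐ p : ℝ × ℝ, g p.2 = g' p.2 := by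
    refine measure_mono_null (fun p hp => ?_)
      (show (volume : Measure (ℝ×ℝ)) (univ ×ˢ {x | g x ≠ g' x}) = 0 from ?_)
    · exact ⟨trivial, hp⟩
    · rw [Measure.volume_eq_prod, Measure.prod_prod]
      rw [show volume {x | g x ≠ g' x} = 0 from hgg', mul_zero]
  have h3 : ∀ᵐ p : ℝ × ℝ, h (p.1 + p.2) = h' (p.1 + p.2) := by
    obtain ⟨M, hMsub, hMmeas, hM0⟩ :=
      exists_measurable_superset_of_null (show volume {x | h x ≠ h' x} = 0 from hhh')
    refine measure_mono_null (fun p hp => ?_)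
      (show (volume : Measure (ℝ×ℝ)) ((fun p : ℝ×ℝ => p.1 + p.2) ⁻¹' M) = 0 from ?_)
    · exact hMsub hp
    · rw [Measure.volume_eq_prod,
        Measure.prod_apply (show MeasurableSet ((fun p : ℝ×ℝ => p.1 + p.2) ⁻¹' M) from (measurable_fst.add measurable_snd) hMmeas)]
      have : ∀ x : ℝ, volume (Prod.mk x ⁻¹' ((fun p : ℝ×ℝ => p.1 + p.2) ⁻¹' M)) = 0 := by
        intro x
        have : Prod.mk x ⁻¹' ((fun p : ℝ×ℝ => p.1 + p.2) ⁻¹' M)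
            = (fun y : ℝ => x + y) ⁻¹' M := rfl
        rw [this, measure_preimage_add volume x M, hM0]
      simp_rw [this, lintegral_zero]
  have hae : (fun p : ℝ×ℝ => ‖f p.1‖ * ‖g p.2‖ * ‖h (p.1 + p.2)‖)
      =ᵐ[volume] fun p => ‖f' p.1‖ * ‖g' p.2‖ * ‖h' (p.1 + p.2)‖ := by
    filter_upwards [h1, h2, h3] with p e1 e2 e3
    rw [e1, e2, e3]
  rw [show (∫ p in S, ‖f p.1‖ * ‖g p.2‖ * ‖h (p.1 + p.2)‖)
      = ∫ p in S, ‖f' p.1‖ * ‖g' p.2‖ * ‖h' (p.1 + p.2)‖ from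
    integral_congr_ae (ae_restrict_of_ae hae)]
  have hmeas : Measurable fun p : ℝ×ℝ => ‖f' p.1‖ * ‖g' p.2‖ * ‖h' (p.1 + p.2)‖ := by
    exact (((hf'm.comp measurable_fst).norm.mul (hg'm.comp measurable_snd).norm).mul
      ((hh'm.comp (measurable_fst.add measurable_snd)).norm))
  rw [integral_eq_lintegral_of_nonneg_ae
    (ae_of_all _ fun p => by positivity) hmeas.aestronglyMeasurable]
  have hofReal : ∀ p : ℝ×ℝ, ENNReal.ofReal (‖f' p.1‖ * ‖g' p.2‖ * ‖h' (p.1 + p.2)‖)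
      = (‖f' p.1‖₊ : ℝ≥0∞) * ‖g' p.2‖₊ * ‖h' (p.1 + p.2)‖₊ := by
    intro p
    rw [ENNReal.ofReal_mul (by positivity), ENNReal.ofReal_mul (by positivity),
      ofReal_norm, ofReal_norm, ofReal_norm, enorm_eq_nnnorm, enorm_eq_nnnorm, enorm_eq_nnnorm]
  rw [lintegral_congr fun p => hofReal p]
  -- main lintegral estimate
  have hvol : volume (Icc (0:ℝ) t') ^ (1/2:ℝ) ≤ ENNReal.ofReal (μ ^ (1/(2*n))) := by
    rw [Real.volume_Icc]
    have h1 : ENNReal.ofReal (t' - 0) ≤ ENNReal.ofReal t :=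
      ENNReal.ofReal_le_ofReal (by simp [ht'_def, min_le_left])
    calc ENNReal.ofReal (t' - 0) ^ (1/2:ℝ) ≤ ENNReal.ofReal t ^ (1/2:ℝ) :=
          ENNReal.rpow_le_rpow h1 (by norm_num)
      _ = ENNReal.ofReal (t ^ (1/2:ℝ)) := ENNReal.ofReal_rpow_of_pos htpos
      _ = ENNReal.ofReal (μ ^ (1/(2*n))) := by
          rw [ht_def, ← Real.rpow_mul hμ.le]
          congr 1
          congr 1
          field_simp
  have ef : eLpNorm f' 2 volume = eLpNorm f 2 volume := eLpNorm_congr_ae hff'.symm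
  have eg : eLpNorm g' 2 volume = eLpNorm g 2 volume := eLpNorm_congr_ae hgg'.symm
  have eh : eLpNorm h' 2 volume = eLpNorm h 2 volume := eLpNorm_congr_ae hhh'.symm
  set E : ℝ≥0∞ := ENNReal.ofReal (μ ^ (1/(2*n))) *
      (eLpNorm f 2 volume * (eLpNorm g 2 volume * eLpNorm h 2 volume)) with hE_def
  have keyA : ∫⁻ p in Icc 0 t' ×ˢ Icc (0:ℝ) 1,
      (‖f' p.1‖₊ : ℝ≥0∞) * ‖g' p.2‖₊ * ‖h' (p.1 + p.2)‖₊ ≤ E := by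
    refine le_trans (strip_bound hf'm hg'm hh'm) ?_
    rw [hE_def, ef, eg, eh]
    exact mul_le_mul_left hvol _
  have keyB : ∫⁻ p in Icc (0:ℝ) 1 ×ˢ Icc 0 t',
      (‖f' p.1‖₊ : ℝ≥0∞) * ‖g' p.2‖₊ * ‖h' (p.1 + p.2)‖₊ ≤ E := by
    have hswap : ∫⁻ p in Icc (0:ℝ) 1 ×ˢ Icc 0 t',
        (‖f' p.1‖₊ : ℝ≥0∞) * ‖g' p.2‖₊ * ‖h' (p.1 + p.2)‖₊
        = ∫⁻ p in Icc 0 t' ×ˢ Icc (0:ℝ) 1,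
        (‖g' p.1‖₊ : ℝ≥0∞) * ‖f' p.2‖₊ * ‖h' (p.1 + p.2)‖₊ := by
      rw [Measure.volume_eq_prod, ← Measure.prod_restrict, ← Measure.prod_restrict,
        ← lintegral_prod_swap (fun p : ℝ×ℝ => (‖g' p.1‖₊ : ℝ≥0∞) * ‖f' p.2‖₊ * ‖h' (p.1 + p.2)‖₊)]
      refine lintegral_congr fun p => ?_
      simp only [Prod.fst_swap, Prod.snd_swap]
      rw [add_comm p.2 p.1]
      ring
    rw [hswap]
    refine le_trans (strip_bound hg'm hf'm hh'm) ?_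
    rw [hE_def, ef, eg, eh]
    refine le_trans (mul_le_mul_left hvol _) ?_
    exact le_of_eq (by ring)
  have key : ∫⁻ p in S, (‖f' p.1‖₊ : ℝ≥0∞) * ‖g' p.2‖₊ * ‖h' (p.1 + p.2)‖₊ ≤ 2 * E := by
    calc ∫⁻ p in S, (‖f' p.1‖₊ : ℝ≥0∞) * ‖g' p.2‖₊ * ‖h' (p.1 + p.2)‖₊
        ≤ ∫⁻ p in (Icc 0 t' ×ˢ Icc (0:ℝ) 1) ∪ (Icc (0:ℝ) 1 ×ˢ Icc 0 t'),
          (‖f' p.1‖₊ : ℝ≥0∞) * ‖g' p.2‖₊ * ‖h' (p.1 + p.2)‖₊ := lintegral_mono_set hsub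
      _ ≤ (∫⁻ p in Icc 0 t' ×ˢ Icc (0:ℝ) 1,
            (‖f' p.1‖₊ : ℝ≥0∞) * ‖g' p.2‖₊ * ‖h' (p.1 + p.2)‖₊)
          + ∫⁻ p in Icc (0:ℝ) 1 ×ˢ Icc 0 t',
            (‖f' p.1‖₊ : ℝ≥0∞) * ‖g' p.2‖₊ * ‖h' (p.1 + p.2)‖₊ := lintegral_union_le _ _ _
      _ ≤ E + E := add_le_add keyA keyB
      _ = 2 * E := (two_mul E).symm
  have hfin : 2 * E ≠ ∞ := by
    rw [hE_def]
    exact ENNReal.mul_ne_top (by norm_num) (ENNReal.mul_ne_top ENNReal.ofReal_ne_top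
      (ENNReal.mul_ne_top hf.eLpNorm_ne_top
        (ENNReal.mul_ne_top hg.eLpNorm_ne_top hh.eLpNorm_ne_top)))
  refine le_trans (ENNReal.toReal_mono hfin key) (le_of_eq ?_)
  rw [hE_def]
  rw [ENNReal.toReal_mul, ENNReal.toReal_mul, ENNReal.toReal_mul, ENNReal.toReal_mul,
    ENNReal.toReal_ofReal (Real.rpow_nonneg hμ.le _), ENNReal.toReal_ofNat]
  ring
end

section
/- Let α₂ be a positive integer and μ ∈ (0,1]. Then for all f, g, h ∈ L²(ℝ), ∫_{{(x,y)∈[0,1]² : y^{α₂} ≤ μ}} |f(x) g(y) h(x+y)| dx dy ≤ C μ^{1/(2α₂)} ‖f‖₂ ‖g‖₂ ‖h‖₂, where C depends only on α₂. -/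
open MeasureTheory

/-- Degenerate trilinear sublevel set estimate: for the monomial `y^{α₂}`,
the integral of `|f(x)g(y)h(x+y)|` over `{(x,y) ∈ [0,1]² : y^{α₂} ≤ μ}` is bounded by
`C μ^{1/(2α₂)} ‖f‖₂‖g‖₂‖h‖₂`, with `C` depending only on `α₂`. -/
theorem stmt4 (α₂ : ℕ) (hα₂ : 1 ≤ α₂) :
    ∃ C : ℝ, 0 < C ∧ ∀ (μ : ℝ), 0 < μ → μ ≤ 1 → ∀ f g h : ℝ → ℂ,
      MemLp f 2 volume → MemLp g 2 volume → MemLp h 2 volume →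
      ∫ p in {p : ℝ × ℝ | p ∈ Set.Icc (0:ℝ) 1 ×ˢ Set.Icc (0:ℝ) 1 ∧ p.2 ^ α₂ ≤ μ},
        ‖f p.1‖ * ‖g p.2‖ * ‖h (p.1 + p.2)‖ ≤
      C * μ ^ (1 / (2 * (α₂ : ℝ))) *
        ((eLpNorm f 2 volume).toReal * (eLpNorm g 2 volume).toReal *
          (eLpNorm h 2 volume).toReal) := by
  refine ⟨1, one_pos, fun μ hμ hμ1 f g h hf hg hh => ?_⟩
  have hα₂' : (α₂ : ℝ) ≠ 0 := by positivity
  set β : ℝ := μ ^ ((α₂ : ℝ)⁻¹) with hβ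
  have hβpos : 0 < β := Real.rpow_pos_of_pos hμ _
  set S : Set (ℝ × ℝ) :=
    {p : ℝ × ℝ | p ∈ Set.Icc (0:ℝ) 1 ×ˢ Set.Icc (0:ℝ) 1 ∧ p.2 ^ α₂ ≤ μ} with hS
  set T : Set ℝ := Set.Icc (0:ℝ) β with hT
  -- set inclusion
  have hsub : S ⊆ Set.univ ×ˢ T := by
    rintro ⟨x, y⟩ ⟨⟨hx, hy⟩, hpow⟩
    refine ⟨trivial, hy.1, ?_⟩
    have hβα : β ^ α₂ = μ := by
      rw [hβ, ← Real.rpow_natCast (μ ^ _) α₂, ← Real.rpow_mul hμ.le,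
        inv_mul_cancel₀ hα₂', Real.rpow_one]
    exact le_of_pow_le_pow_left₀ (by omega) hβpos.le (hβα ▸ hpow)
  -- ennreal-valued functions
  set F : ℝ → ENNReal := fun x => (‖f x‖₊ : ENNReal) with hFdef
  set G : ℝ → ENNReal := fun x => (‖g x‖₊ : ENNReal) with hGdef
  set H : ℝ → ENNReal := fun x => (‖h x‖₊ : ENNReal) with hHdef
  have hF : AEMeasurable F volume := hf.aestronglyMeasurable.enorm
  have hG : AEMeasurable G volume := hg.aestronglyMeasurable.enorm
  have hH : AEMeasurable H volume := hh.aestronglyMeasurable.enorm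
  set Nf2 : ENNReal := ∫⁻ x, F x ^ (2:ℝ) ∂volume with hNf2def
  set Ng2 : ENNReal := ∫⁻ x, G x ^ (2:ℝ) ∂volume with hNg2def
  set Nh2 : ENNReal := ∫⁻ x, H x ^ (2:ℝ) ∂volume with hNh2def
  have hNf : eLpNorm f 2 volume = Nf2 ^ ((1:ℝ)/2) := by
    rw [eLpNorm_eq_lintegral_rpow_enorm_toReal two_ne_zero ENNReal.ofNat_ne_top]
    norm_num [hNf2def, hFdef]
    rfl
  have hNg : eLpNorm g 2 volume = Ng2 ^ ((1:ℝ)/2) := by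
    rw [eLpNorm_eq_lintegral_rpow_enorm_toReal two_ne_zero ENNReal.ofNat_ne_top]
    norm_num [hNg2def, hGdef]
    rfl
  have hNh : eLpNorm h 2 volume = Nh2 ^ ((1:ℝ)/2) := by
    rw [eLpNorm_eq_lintegral_rpow_enorm_toReal two_ne_zero ENNReal.ofNat_ne_top]
    norm_num [hNh2def, hHdef]
    rfl
  have hNf2ne : Nf2 ≠ ⊤ := by
    intro hTop
    have := hf.eLpNorm_ne_top
    rw [hNf, hTop, ENNReal.top_rpow_of_pos (by norm_num)] at this
    exact this rfl
  have hNg2ne : Ng2 ≠ ⊤ := by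
    intro hTop
    have := hg.eLpNorm_ne_top
    rw [hNg, hTop, ENNReal.top_rpow_of_pos (by norm_num)] at this
    exact this rfl
  have hNh2ne : Nh2 ≠ ⊤ := by
    intro hTop
    have := hh.eLpNorm_ne_top
    rw [hNh, hTop, ENNReal.top_rpow_of_pos (by norm_num)] at this
    exact this rfl
  have hcj : Real.HolderConjugate 2 2 := Real.holderConjugate_iff.mpr ⟨one_lt_two, by norm_num⟩
  have vol_prod : (volume : Measure (ℝ × ℝ)) = (volume : Measure ℝ).prod volume :=
    Measure.volume_eq_prod ℝ ℝ
  have hΦ : AEMeasurable (fun p : ℝ × ℝ => F p.1 * G p.2 * H (p.1 + p.2))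
      ((volume : Measure ℝ).prod volume) := by
    have h1 : AEMeasurable (fun p : ℝ × ℝ => F p.1) ((volume : Measure ℝ).prod volume) :=
      hF.comp_quasiMeasurePreserving Measure.quasiMeasurePreserving_fst
    have h2 : AEMeasurable (fun p : ℝ × ℝ => G p.2) ((volume : Measure ℝ).prod volume) :=
      hG.comp_quasiMeasurePreserving Measure.quasiMeasurePreserving_snd
    have h3 : AEMeasurable (fun p : ℝ × ℝ => H (p.1 + p.2))
        ((volume : Measure ℝ).prod volume) := by
      have := (hH.comp_quasiMeasurePreserving Measure.quasiMeasurePreserving_snd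
        ).comp_quasiMeasurePreserving
        (measurePreserving_prod_add volume volume).quasiMeasurePreserving
      simpa [Function.comp_def] using this
    exact (h1.mul h2).mul h3
  -- Cauchy-Schwarz bound on the inner integral
  have hinner : ∀ y : ℝ, ∫⁻ x, F x * H (x + y) ∂volume ≤
      Nf2 ^ ((1:ℝ)/2) * Nh2 ^ ((1:ℝ)/2) := by
    intro y
    have hHy : AEMeasurable (fun x => H (x + y)) volume := by
      have := hH.comp_quasiMeasurePreserving
        (measurePreserving_add_right volume y).quasiMeasurePreserving
      simpa [Function.comp_def] using this
    calc ∫⁻ x, F x * H (x + y) ∂volume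
        ≤ (∫⁻ x, F x ^ (2:ℝ) ∂volume) ^ ((1:ℝ)/2) *
          (∫⁻ x, H (x + y) ^ (2:ℝ) ∂volume) ^ ((1:ℝ)/2) :=
          ENNReal.lintegral_mul_le_Lp_mul_Lq volume hcj hF hHy
      _ = Nf2 ^ ((1:ℝ)/2) * Nh2 ^ ((1:ℝ)/2) := by
          rw [lintegral_add_right_eq_self (fun x => H x ^ (2:ℝ)) y]
  set c : ENNReal := Nf2 ^ ((1:ℝ)/2) * Nh2 ^ ((1:ℝ)/2) with hcdef
  have hcne : c ≠ ⊤ := ENNReal.mul_ne_top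
    (ENNReal.rpow_ne_top_of_nonneg (by norm_num) hNf2ne)
    (ENNReal.rpow_ne_top_of_nonneg (by norm_num) hNh2ne)
  -- outer Cauchy-Schwarz
  have houter : ∫⁻ y in T, G y ∂volume ≤
      (ENNReal.ofReal β) ^ ((1:ℝ)/2) * Ng2 ^ ((1:ℝ)/2) := by
    have h1 : ∫⁻ y in T, G y ∂volume ≤
        (∫⁻ y in T, (1:ENNReal) ^ (2:ℝ) ∂volume) ^ ((1:ℝ)/2) *
        (∫⁻ y in T, G y ^ (2:ℝ) ∂volume) ^ ((1:ℝ)/2) := by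
      have := ENNReal.lintegral_mul_le_Lp_mul_Lq (volume.restrict T) hcj
        aemeasurable_const hG.restrict (f := fun _ => (1:ENNReal)) (g := G)
      simpa using this
    refine h1.trans ?_
    gcongr
    · simp [hT, Real.volume_Icc, hβpos.le]
    · exact lintegral_mono' Measure.restrict_le_self le_rfl
  -- main lintegral bound
  have hmain : ∫⁻ p in S, F p.1 * G p.2 * H (p.1 + p.2) ∂volume ≤
      (ENNReal.ofReal β) ^ ((1:ℝ)/2) * Ng2 ^ ((1:ℝ)/2) * c := by
    have hres : (volume : Measure (ℝ × ℝ)).restrict (Set.univ ×ˢ T) =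
        (volume : Measure ℝ).prod (volume.restrict T) := by
      rw [vol_prod, ← Measure.prod_restrict, Measure.restrict_univ]
    calc ∫⁻ p in S, F p.1 * G p.2 * H (p.1 + p.2) ∂volume
        ≤ ∫⁻ p in Set.univ ×ˢ T, F p.1 * G p.2 * H (p.1 + p.2) ∂volume := lintegral_mono_set hsub
      _ = ∫⁻ y in T, ∫⁻ x, F x * G y * H (x + y) ∂volume ∂volume := by
          rw [hres, MeasureTheory.lintegral_prod_symm _
            (hΦ.mono' (Measure.AbsolutelyContinuous.prod
              Measure.AbsolutelyContinuous.rfl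
              Measure.restrict_le_self.absolutelyContinuous))]
      _ ≤ ∫⁻ y in T, G y * c ∂volume := by
          refine lintegral_mono fun y => ?_
          have heq : ∀ x, F x * G y * H (x + y) = G y * (F x * H (x + y)) := fun x => by
            ring
          simp_rw [heq]
          rw [lintegral_const_mul' _ _ ENNReal.coe_ne_top]
          exact mul_le_mul_right (hinner y) _
      _ = (∫⁻ y in T, G y ∂volume) * c := lintegral_mul_const' c _ hcne
      _ ≤ (ENNReal.ofReal β) ^ ((1:ℝ)/2) * Ng2 ^ ((1:ℝ)/2) * c :=
          mul_le_mul_left houter c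
  -- convert the Bochner integral on the left
  have hmΦ : AEStronglyMeasurable
      (fun p : ℝ × ℝ => ‖f p.1‖ * ‖g p.2‖ * ‖h (p.1 + p.2)‖) volume := by
    rw [vol_prod]
    refine ((hf.aestronglyMeasurable.comp_fst.norm.mul hg.aestronglyMeasurable.comp_snd.norm)).mul ?_
    have := ((hh.aestronglyMeasurable.comp_snd).comp_quasiMeasurePreserving
      (measurePreserving_prod_add volume volume).quasiMeasurePreserving).norm
    simpa [Function.comp_def] using this
  have hLHS : ∫ p in S, ‖f p.1‖ * ‖g p.2‖ * ‖h (p.1 + p.2)‖ =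
      (∫⁻ p in S, F p.1 * G p.2 * H (p.1 + p.2) ∂volume).toReal := by
    rw [integral_eq_lintegral_of_nonneg_ae
      (Filter.Eventually.of_forall fun p => by positivity) hmΦ.restrict]
    congr 1
    refine lintegral_congr fun p => ?_
    rw [ENNReal.ofReal_mul (by positivity), ENNReal.ofReal_mul (norm_nonneg _),
      ofReal_norm, ofReal_norm, ofReal_norm]
    rfl
  rw [hLHS, hNf, hNg, hNh]
  have hBndne : (ENNReal.ofReal β) ^ ((1:ℝ)/2) * Ng2 ^ ((1:ℝ)/2) * c ≠ ⊤ :=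
    ENNReal.mul_ne_top (ENNReal.mul_ne_top
      (ENNReal.rpow_ne_top_of_nonneg (by norm_num) ENNReal.ofReal_ne_top)
      (ENNReal.rpow_ne_top_of_nonneg (by norm_num) hNg2ne)) hcne
  refine le_trans (ENNReal.toReal_mono hBndne hmain) ?_
  rw [hcdef, ENNReal.toReal_mul, ENNReal.toReal_mul, ENNReal.toReal_mul]
  have hVol : ((ENNReal.ofReal β) ^ ((1:ℝ)/2)).toReal = μ ^ (1 / (2 * (α₂ : ℝ))) := by
    rw [← ENNReal.toReal_rpow, ENNReal.toReal_ofReal hβpos.le, hβ,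
      ← Real.rpow_mul hμ.le]
    congr 1
    rw [one_div, one_div, mul_inv]
    ring
  rw [hVol, one_mul]
  ring_nf
  exact le_of_eq (by ring)
end

section
/- Let H : ℝ² → ℝ be a polynomial of degree at most n that is not identically zero, and suppose for some multi-index (α,β) the mixed partial ∂_x^α ∂_y^β H is a nonzero constant with |∂_x^α ∂_y^β H| ≥ 1 on [0,1]². Then for any axis-parallel rectangle R ⊆ [0,1]² of dimensions r₁ × r₂, sup_{(x,y)∈R} |H(x,y)| ≥ C r₁^α r₂^β, where C > 0 depends only on α and β. -/
open MvPolynomial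

section Aux

open Finset

lemma fd_iter_sum_pow {ι : Type*} (h x : ℝ) (n : ℕ) (s : Finset ι) (c : ι → ℝ) (e : ι → ℕ) :
    (fwdDiff h)^[n] (fun t : ℝ => ∑ j ∈ s, c j * t ^ e j) x
      = ∑ j ∈ s, c j * (fwdDiff h)^[n] (fun t : ℝ => t ^ e j) x := by
  have h1 : (fun t : ℝ => ∑ j ∈ s, c j * t ^ e j)
      = ∑ j ∈ s, c j • (fun t : ℝ => t ^ e j) := by
    funext t; simp [Finset.sum_apply]
  rw [h1, fwdDiff_iter_finset_sum]
  simp [Finset.sum_apply]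

lemma fd_pow_lt (h : ℝ) : ∀ i n : ℕ, i < n → ∀ x : ℝ, (fwdDiff h)^[n] (fun t : ℝ => t ^ i) x = 0 := by
  intro i
  induction i using Nat.strong_induction_on with
  | _ i IH =>
    intro n hn x
    obtain ⟨m, rfl⟩ : ∃ m, n = m + 1 := ⟨n - 1, by omega⟩
    rw [Function.iterate_succ_apply]
    have hexp : fwdDiff h (fun t : ℝ => t ^ i)
        = fun t : ℝ => ∑ j ∈ Finset.range i, ((i.choose j : ℝ) * h ^ (i - j)) * t ^ j := by
      funext t
      show (t + h) ^ i - t ^ i = _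
      rw [add_pow, Finset.sum_range_succ]
      simp only [Nat.choose_self, Nat.cast_one, Nat.sub_self, pow_zero, mul_one]
      rw [add_sub_cancel_right]
      exact Finset.sum_congr rfl fun j _ => by ring
    rw [hexp, fd_iter_sum_pow]
    apply Finset.sum_eq_zero
    intro j hj
    rw [IH j (Finset.mem_range.mp hj) m (by have := Finset.mem_range.mp hj; omega) x, mul_zero]

lemma fd_pow_eq (h : ℝ) : ∀ n : ℕ, ∀ x : ℝ, (fwdDiff h)^[n] (fun t : ℝ => t ^ n) x
    = (n.factorial : ℝ) * h ^ n := by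
  intro n
  induction n with
  | zero => intro x; simp
  | succ n ih =>
    intro x
    rw [Function.iterate_succ_apply]
    have hexp : fwdDiff h (fun t : ℝ => t ^ (n + 1))
        = fun t : ℝ => ∑ j ∈ Finset.range (n + 1), (((n+1).choose j : ℝ) * h ^ (n + 1 - j)) * t ^ j := by
      funext t
      show (t + h) ^ (n+1) - t ^ (n+1) = _
      rw [add_pow, Finset.sum_range_succ]
      simp only [Nat.choose_self, Nat.cast_one, Nat.sub_self, pow_zero, mul_one]
      rw [add_sub_cancel_right]
      exact Finset.sum_congr rfl fun j _ => by ring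
    rw [hexp, fd_iter_sum_pow, Finset.sum_range_succ]
    rw [Finset.sum_eq_zero (fun j hj => by
      rw [fd_pow_lt h j n (Finset.mem_range.mp hj) x, mul_zero])]
    rw [zero_add, ih x, Nat.choose_succ_self_right]
    have : n + 1 - n = 1 := by omega
    rw [this]
    push_cast [Nat.factorial_succ]
    ring

lemma coeff_pderiv (i : Fin 2) (P : MvPolynomial (Fin 2) ℝ) (m : Fin 2 →₀ ℕ) :
    coeff m (pderiv i P) = ((m i : ℝ) + 1) * coeff (m + Finsupp.single i 1) P := by
  induction P using MvPolynomial.induction_on' with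
  | add p q hp hq => simp [coeff_add, hp, hq, mul_add]
  | monomial s a =>
    rw [pderiv_monomial, coeff_monomial, coeff_monomial]
    rcases Nat.eq_zero_or_pos (s i) with hsi | hsi
    · have h1 : s - Finsupp.single i 1 = s := by
        ext j
        rcases eq_or_ne j i with rfl | hj
        · simp [Finsupp.tsub_apply, hsi]
        · simp [Finsupp.tsub_apply, Finsupp.single_apply, (Ne.symm hj)]
      have h2 : s ≠ m + Finsupp.single i 1 := by
        intro h
        apply_fun (fun f => f i) at h
        simp [Finsupp.add_apply, Finsupp.single_eq_same] at h
        omega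
      rw [h1, if_neg h2, mul_zero]
      split_ifs with h
      · simp [hsi]
      · rfl
    · have hle : Finsupp.single i 1 ≤ s := by
        rw [Finsupp.single_le_iff]; omega
      have hiff : s - Finsupp.single i 1 = m ↔ s = m + Finsupp.single i 1 :=
        tsub_eq_iff_eq_add_of_le hle
      by_cases h : s = m + Finsupp.single i 1
      · rw [if_pos (hiff.mpr h), if_pos h]
        have hv : s i = m i + 1 := by rw [h]; simp
        rw [hv]; push_cast; ring
      · rw [if_neg (fun hh => h (hiff.mp hh)), if_neg h, mul_zero]

lemma coeff_pderiv_iter (i : Fin 2) (n : ℕ) (P : MvPolynomial (Fin 2) ℝ) :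
    ∀ m : Fin 2 →₀ ℕ, coeff m ((fun Q => pderiv i Q)^[n] P)
      = ((m i + n).descFactorial n : ℝ) * coeff (m + Finsupp.single i n) P := by
  induction n with
  | zero => intro m; simp
  | succ n ih =>
    intro m
    rw [Function.iterate_succ_apply']
    rw [coeff_pderiv, ih]
    have h1 : (m + Finsupp.single i 1 : Fin 2 →₀ ℕ) i = m i + 1 := by simp
    have h2 : m + Finsupp.single i 1 + Finsupp.single i n = m + Finsupp.single i (n + 1) := by
      rw [add_assoc, ← Finsupp.single_add, add_comm 1 n]
    rw [h1, h2]
    have h3 : m i + (n + 1) = m i + 1 + n := by omega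
    rw [h3, Nat.descFactorial_succ]
    have h4 : m i + 1 + n - n = m i + 1 := by omega
    rw [h4]
    push_cast
    ring

lemma coeff_of_const (α β : ℕ) (H : MvPolynomial (Fin 2) ℝ) (c : ℝ)
    (hc : (fun P => pderiv (0 : Fin 2) P)^[α] ((fun P => pderiv (1 : Fin 2) P)^[β] H)
      = MvPolynomial.C c) (m : Fin 2 →₀ ℕ) :
    (if 0 = m then c else 0)
      = ((m 0 + α).descFactorial α : ℝ) * ((m 1 + β).descFactorial β : ℝ)
        * coeff (m + (Finsupp.single 0 α + Finsupp.single 1 β)) H := by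
  have h := congrArg (coeff m) hc
  rw [coeff_pderiv_iter, coeff_pderiv_iter, coeff_C] at h
  have e1 : (m + Finsupp.single (0 : Fin 2) α : Fin 2 →₀ ℕ) 1 = m 1 := by
    simp [Finsupp.single_apply]
  rw [e1, add_assoc] at h
  rw [← h]; ring

lemma coeff_mu (α β : ℕ) (H : MvPolynomial (Fin 2) ℝ) (c : ℝ)
    (hc : (fun P => pderiv (0 : Fin 2) P)^[α] ((fun P => pderiv (1 : Fin 2) P)^[β] H)
      = MvPolynomial.C c) :
    (α.factorial : ℝ) * (β.factorial : ℝ)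
      * coeff (Finsupp.single 0 α + Finsupp.single 1 β) H = c := by
  have h := coeff_of_const α β H c hc 0
  simp only [Finsupp.coe_zero, Pi.zero_apply, Nat.zero_add, Nat.descFactorial_self,
    zero_add, if_pos rfl] at h
  rw [if_pos trivial] at h
  rw [← h]

lemma coeff_vanish (α β : ℕ) (H : MvPolynomial (Fin 2) ℝ) (c : ℝ)
    (hc : (fun P => pderiv (0 : Fin 2) P)^[α] ((fun P => pderiv (1 : Fin 2) P)^[β] H)
      = MvPolynomial.C c)
    (m : Fin 2 →₀ ℕ) (hm0 : α ≤ m 0) (hm1 : β ≤ m 1)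
    (hne : m ≠ Finsupp.single 0 α + Finsupp.single 1 β) :
    coeff m H = 0 := by
  set μ : Fin 2 →₀ ℕ := Finsupp.single 0 α + Finsupp.single 1 β with hμdef
  have hμ0 : μ 0 = α := by simp [hμdef, Finsupp.single_apply]
  have hμ1 : μ 1 = β := by simp [hμdef, Finsupp.single_apply]
  have hle : μ ≤ m := by
    rw [Finsupp.le_def]
    intro i
    fin_cases i
    · show μ 0 ≤ m 0
      rw [hμ0]; exact hm0
    · show μ 1 ≤ m 1
      rw [hμ1]; exact hm1
  have hsub : m - μ + μ = m := tsub_add_cancel_of_le hle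
  have hne0 : (0 : Fin 2 →₀ ℕ) ≠ m - μ := by
    intro h
    exact hne (by rw [← hsub, ← h, zero_add])
  have h := coeff_of_const α β H c hc (m - μ)
  rw [if_neg hne0, hsub] at h
  have d1 : ((((m - μ) 0 + α).descFactorial α : ℕ) : ℝ) ≠ 0 := by
    rw [Nat.cast_ne_zero, Ne, Nat.descFactorial_eq_zero_iff_lt]; omega
  have d2 : ((((m - μ) 1 + β).descFactorial β : ℕ) : ℝ) ≠ 0 := by
    rw [Nat.cast_ne_zero, Ne, Nat.descFactorial_eq_zero_iff_lt]; omega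
  by_contra hcne
  exact (mul_ne_zero (mul_ne_zero d1 d2) hcne) h.symm

lemma key_identity (α β : ℕ) (H : MvPolynomial (Fin 2) ℝ) (c : ℝ)
    (hc : (fun P => pderiv (0 : Fin 2) P)^[α] ((fun P => pderiv (1 : Fin 2) P)^[β] H)
      = MvPolynomial.C c) (x₀ y₀ h₁ h₂ : ℝ) :
    (fwdDiff h₁)^[α] (fun x => (fwdDiff h₂)^[β] (fun y => eval ![x, y] H) y₀) x₀
      = c * (h₁ ^ α * h₂ ^ β) := by
  have hμ0 : (Finsupp.single (0 : Fin 2) α + Finsupp.single 1 β : Fin 2 →₀ ℕ) 0 = α := by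
    simp [Finsupp.single_apply]
  have hμ1 : (Finsupp.single (0 : Fin 2) α + Finsupp.single 1 β : Fin 2 →₀ ℕ) 1 = β := by
    simp [Finsupp.single_apply]
  have hin : (fun x => (fwdDiff h₂)^[β] (fun y => eval ![x, y] H) y₀)
      = fun x : ℝ => ∑ m ∈ H.support,
          (coeff m H * (fwdDiff h₂)^[β] (fun y : ℝ => y ^ m 1) y₀) * x ^ m 0 := by
    funext x
    have hev : (fun y => eval ![x, y] H)
        = fun y : ℝ => ∑ m ∈ H.support, (coeff m H * x ^ m 0) * y ^ m 1 := by
      funext y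
      rw [eval_eq']
      refine Finset.sum_congr rfl fun m _ => ?_
      rw [Fin.prod_univ_two]
      simp only [Matrix.cons_val_zero, Matrix.cons_val_one, Matrix.head_cons]
      ring
    calc (fwdDiff h₂)^[β] (fun y => eval ![x, y] H) y₀
        = (fwdDiff h₂)^[β] (fun y : ℝ => ∑ m ∈ H.support, (coeff m H * x ^ m 0) * y ^ m 1) y₀ := by
          rw [hev]
      _ = ∑ m ∈ H.support, (coeff m H * x ^ m 0) * (fwdDiff h₂)^[β] (fun y : ℝ => y ^ m 1) y₀ :=
          fd_iter_sum_pow h₂ y₀ β H.support _ _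
      _ = ∑ m ∈ H.support,
            (coeff m H * (fwdDiff h₂)^[β] (fun y : ℝ => y ^ m 1) y₀) * x ^ m 0 := by
          refine Finset.sum_congr rfl fun m _ => by ring
  rw [hin]
  rw [fd_iter_sum_pow h₁ x₀ α H.support _ _]
  rw [Finset.sum_eq_single (Finsupp.single 0 α + Finsupp.single 1 β)]
  · rw [hμ0, hμ1, fd_pow_eq, fd_pow_eq]
    have := coeff_mu α β H c hc
    linear_combination (h₁ ^ α * h₂ ^ β) * this
  · intro m _ hmne
    by_cases hm0 : m 0 < α
    · rw [fd_pow_lt h₁ (m 0) α hm0 x₀, mul_zero]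
    · by_cases hm1 : m 1 < β
      · rw [fd_pow_lt h₂ (m 1) β hm1 y₀, mul_zero, zero_mul]
      · rw [coeff_vanish α β H c hc m (by omega) (by omega) hmne, zero_mul, zero_mul]
  · intro hμnot
    rw [MvPolynomial.notMem_support_iff.mp hμnot, zero_mul, zero_mul]

end Aux

section Aux2
open Finset

/-- Lower bound for a polynomial on a rectangle: if some mixed partial `∂_x^α ∂_y^β H`
satisfies `|∂_x^α ∂_y^β H| ≥ 1` on `[0,1]²` (and is a nonzero constant polynomial), then for
every axis-parallel rectangle `R ⊆ [0,1]²` of dimensions `r₁ × r₂` one has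
`sup_R |H| ≥ C r₁^α r₂^β` with `C` depending only on `α, β`. -/
theorem stmt13 (α β : ℕ) :
    ∃ C : ℝ, 0 < C ∧ ∀ (n : ℕ) (H : MvPolynomial (Fin 2) ℝ), H ≠ 0 →
      H.totalDegree ≤ n →
      (∃ c : ℝ, c ≠ 0 ∧
        ((fun P => pderiv (0 : Fin 2) P)^[α] ((fun P => pderiv (1 : Fin 2) P)^[β] H)) =
          MvPolynomial.C c) →
      (∀ x y : ℝ, x ∈ Set.Icc (0:ℝ) 1 → y ∈ Set.Icc (0:ℝ) 1 →
        1 ≤ |MvPolynomial.eval ![x, y]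
          ((fun P => pderiv (0 : Fin 2) P)^[α] ((fun P => pderiv (1 : Fin 2) P)^[β] H))|) →
      ∀ (x₀ y₀ r₁ r₂ : ℝ), 0 < r₁ → 0 < r₂ →
        Set.Icc x₀ (x₀ + r₁) ×ˢ Set.Icc y₀ (y₀ + r₂) ⊆
          Set.Icc (0:ℝ) 1 ×ˢ Set.Icc (0:ℝ) 1 →
        ∃ x y : ℝ, (x, y) ∈ Set.Icc x₀ (x₀ + r₁) ×ˢ Set.Icc y₀ (y₀ + r₂) ∧
          C * r₁ ^ α * r₂ ^ β ≤ |MvPolynomial.eval ![x, y] H| := by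
  refine ⟨((α + 1 : ℝ) ^ α * (β + 1) ^ β * 2 ^ (α + β))⁻¹, by positivity, ?_⟩
  rintro n H _ _ ⟨c, hc0, hc⟩ hlow x₀ y₀ r₁ r₂ hr₁ hr₂ hsub
  have hc1 : (1 : ℝ) ≤ |c| := by
    have h00 := hlow 0 0 ⟨le_refl 0, zero_le_one⟩ ⟨le_refl 0, zero_le_one⟩
    rwa [hc, eval_C] at h00
  set h₁ : ℝ := r₁ / (α + 1) with hh₁
  set h₂ : ℝ := r₂ / (β + 1) with hh₂
  have hh₁pos : 0 < h₁ := by rw [hh₁]; positivity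
  have hh₂pos : 0 < h₂ := by rw [hh₂]; positivity
  -- explicit double-sum identity
  have hS2 : ∑ k ∈ Finset.range (α + 1), ∑ l ∈ Finset.range (β + 1),
      ((-1 : ℝ) ^ (α - k) * (α.choose k) * ((-1 : ℝ) ^ (β - l) * (β.choose l)))
        * eval ![x₀ + k * h₁, y₀ + l * h₂] H
      = c * (h₁ ^ α * h₂ ^ β) := by
    rw [← key_identity α β H c hc x₀ y₀ h₁ h₂]
    rw [fwdDiff_iter_eq_sum_shift]
    refine Finset.sum_congr rfl fun k hk => ?_
    rw [zsmul_eq_mul]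
    simp only [nsmul_eq_mul]
    rw [fwdDiff_iter_eq_sum_shift, Finset.mul_sum]
    refine Finset.sum_congr rfl fun l hl => ?_
    rw [zsmul_eq_mul]
    simp only [nsmul_eq_mul]
    push_cast
    ring
  -- max over the grid
  obtain ⟨p, hp, hpmax⟩ := Finset.exists_max_image
    ((Finset.range (α + 1)) ×ˢ (Finset.range (β + 1)))
    (fun q : ℕ × ℕ => |eval ![x₀ + q.1 * h₁, y₀ + q.2 * h₂] H|) ⟨(0, 0), by simp⟩
  set M := |eval ![x₀ + (p.1 : ℝ) * h₁, y₀ + (p.2 : ℝ) * h₂] H| with hM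
  have hMnn : 0 ≤ M := abs_nonneg _
  have hMb : ∀ k ∈ Finset.range (α + 1), ∀ l ∈ Finset.range (β + 1),
      |eval ![x₀ + (k : ℝ) * h₁, y₀ + (l : ℝ) * h₂] H| ≤ M := fun k hk l hl =>
    hpmax (k, l) (Finset.mem_product.mpr ⟨hk, hl⟩)
  have h2α : ∑ k ∈ Finset.range (α + 1), ((α.choose k : ℝ)) = 2 ^ α := by
    exact_mod_cast congrArg (Nat.cast (R := ℝ)) (Nat.sum_range_choose α)
  have h2β : ∑ l ∈ Finset.range (β + 1), ((β.choose l : ℝ)) = 2 ^ β := by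
    exact_mod_cast congrArg (Nat.cast (R := ℝ)) (Nat.sum_range_choose β)
  have habs : |c| * (h₁ ^ α * h₂ ^ β) ≤ 2 ^ α * (2 ^ β * M) := by
    calc |c| * (h₁ ^ α * h₂ ^ β) = |c * (h₁ ^ α * h₂ ^ β)| := by
          rw [abs_mul, abs_of_pos (show (0:ℝ) < h₁ ^ α * h₂ ^ β by positivity)]
      _ = |∑ k ∈ Finset.range (α + 1), ∑ l ∈ Finset.range (β + 1),
            ((-1 : ℝ) ^ (α - k) * (α.choose k) * ((-1 : ℝ) ^ (β - l) * (β.choose l)))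
              * eval ![x₀ + k * h₁, y₀ + l * h₂] H| := by rw [hS2]
      _ ≤ ∑ k ∈ Finset.range (α + 1), |∑ l ∈ Finset.range (β + 1),
            ((-1 : ℝ) ^ (α - k) * (α.choose k) * ((-1 : ℝ) ^ (β - l) * (β.choose l)))
              * eval ![x₀ + k * h₁, y₀ + l * h₂] H| := Finset.abs_sum_le_sum_abs _ _
      _ ≤ ∑ k ∈ Finset.range (α + 1), ∑ l ∈ Finset.range (β + 1),
            (α.choose k : ℝ) * ((β.choose l : ℝ) * M) := by
          refine Finset.sum_le_sum fun k hk => ?_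
          refine (Finset.abs_sum_le_sum_abs _ _).trans (Finset.sum_le_sum fun l hl => ?_)
          have e1 : |((-1 : ℝ) ^ (α - k) * (α.choose k) * ((-1 : ℝ) ^ (β - l) * (β.choose l)))
              * eval ![x₀ + k * h₁, y₀ + l * h₂] H|
              = (α.choose k : ℝ) * ((β.choose l : ℝ)
                  * |eval ![x₀ + k * h₁, y₀ + l * h₂] H|) := by
            simp [abs_mul, abs_pow]
            ring
          rw [e1]
          have := hMb k hk l hl
          gcongr
      _ = 2 ^ α * (2 ^ β * M) := by
          rw [← h2α, Finset.sum_mul]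
          refine Finset.sum_congr rfl fun k hk => ?_
          rw [← Finset.mul_sum, ← Finset.sum_mul, h2β]
  have hmain : h₁ ^ α * h₂ ^ β ≤ 2 ^ α * (2 ^ β * M) := by
    have := mul_le_mul_of_nonneg_right hc1 (show (0:ℝ) ≤ h₁ ^ α * h₂ ^ β by positivity)
    rw [one_mul] at this
    exact this.trans habs
  -- the witness point
  have hp' := Finset.mem_product.mp hp
  have hp1 : (p.1 : ℝ) ≤ α := by
    exact_mod_cast Nat.lt_succ_iff.mp (Finset.mem_range.mp hp'.1)
  have hp2 : (p.2 : ℝ) ≤ β := by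
    exact_mod_cast Nat.lt_succ_iff.mp (Finset.mem_range.mp hp'.2)
  refine ⟨x₀ + (p.1 : ℝ) * h₁, y₀ + (p.2 : ℝ) * h₂, ?_, ?_⟩
  · simp only [Set.mem_prod, Set.mem_Icc]
    have h2a : (α : ℝ) * h₁ ≤ r₁ := by
      rw [hh₁, ← mul_div_assoc, div_le_iff₀ (show (0:ℝ) < (α : ℝ) + 1 by positivity)]
      nlinarith
    have h2b : (β : ℝ) * h₂ ≤ r₂ := by
      rw [hh₂, ← mul_div_assoc, div_le_iff₀ (show (0:ℝ) < (β : ℝ) + 1 by positivity)]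
      nlinarith
    have h1a : (p.1 : ℝ) * h₁ ≤ (α : ℝ) * h₁ := mul_le_mul_of_nonneg_right hp1 hh₁pos.le
    have h1b : (p.2 : ℝ) * h₂ ≤ (β : ℝ) * h₂ := mul_le_mul_of_nonneg_right hp2 hh₂pos.le
    have hge1 : 0 ≤ (p.1 : ℝ) * h₁ := mul_nonneg (Nat.cast_nonneg _) hh₁pos.le
    have hge2 : 0 ≤ (p.2 : ℝ) * h₂ := mul_nonneg (Nat.cast_nonneg _) hh₂pos.le
    exact ⟨⟨by linarith, by linarith⟩, ⟨by linarith, by linarith⟩⟩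
  · -- final inequality
    have e : h₁ ^ α * h₂ ^ β = r₁ ^ α * r₂ ^ β / ((α + 1 : ℝ) ^ α * (β + 1) ^ β) := by
      rw [hh₁, hh₂, div_pow, div_pow]
      ring
    rw [e] at hmain
    rw [div_le_iff₀ (show (0:ℝ) < (α + 1 : ℝ) ^ α * (β + 1) ^ β by positivity)] at hmain
    rw [mul_assoc, inv_mul_le_iff₀ (show (0:ℝ) < (α + 1 : ℝ) ^ α * (β + 1) ^ β * 2 ^ (α + β)
      by positivity)]
    calc r₁ ^ α * r₂ ^ β ≤ 2 ^ α * (2 ^ β * M) * ((α + 1 : ℝ) ^ α * (β + 1) ^ β) := hmain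
      _ = (α + 1 : ℝ) ^ α * (β + 1) ^ β * 2 ^ (α + β) * M := by ring

end Aux2
end
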